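/- The function φ(x) = (9 − 24x²) cos x − 9 cos(3x) − 4x sin(3x) satisfies φ(x) > 0 for every x with 0 < x ≤ π/2. -/

import Mathlib

set_option maxHeartbeats 1000000

open Real Set

private lemma phi_nonneg_of_hasDerivAt (f f' : ℝ → ℝ) (hf : ∀ y, HasDerivAt f (f' y) y)
    (h0 : f 0 = 0) (hd : ∀ y, 0 ≤ y → 0 ≤ f' y) {x : ℝ} (hx : 0 ≤ x) : 0 ≤ f x := by
  have hm : MonotoneOn f (Ici 0) := by
    apply monotoneOn_of_deriv_nonneg (convex_Ici 0)
      (continuousOn_of_forall_continuousAt fun y _ => (hf y).continuousAt)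
      (fun y _ => (hf y).differentiableAt.differentiableWithinAt)
    intro y hy
    rw [(hf y).deriv]
    exact hd y (le_of_lt (by simpa using hy))
  have := hm (self_mem_Ici) hx hx
  rwa [h0] at this

private lemma phi_sin_ge_t3 {x : ℝ} (hx : 0 ≤ x) : x - x^3/6 ≤ Real.sin x := by
  have h := phi_nonneg_of_hasDerivAt (fun y => Real.sin y - (y - y^3/6))
    (fun y => Real.cos y - (1 - y^2/2))
    (fun y => by
      have := (Real.hasDerivAt_sin y).sub ((hasDerivAt_id y).sub ((hasDerivAt_pow 3 y).div_const 6))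
      refine this.congr_deriv ?_
      simp
      ring)
    (by norm_num)
    (fun y _ => by nlinarith [Real.one_sub_sq_div_two_le_cos (x := y)]) hx
  simpa using h

private lemma phi_cos_le_t4 {x : ℝ} (hx : 0 ≤ x) : Real.cos x ≤ 1 - x^2/2 + x^4/24 := by
  have h := phi_nonneg_of_hasDerivAt (fun y => 1 - y^2/2 + y^4/24 - Real.cos y)
    (fun y => -(y - y^3/6) + Real.sin y)
    (fun y => by
      have := ((((hasDerivAt_const y (1:ℝ)).sub ((hasDerivAt_pow 2 y).div_const 2)).add
        ((hasDerivAt_pow 4 y).div_const 24)).sub (Real.hasDerivAt_cos y))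
      refine this.congr_deriv ?_
      simp
      ring)
    (by norm_num)
    (fun y hy => by nlinarith [phi_sin_ge_t3 hy]) hx
  linarith [h]

private lemma phi_sin_le_t5 {x : ℝ} (hx : 0 ≤ x) : Real.sin x ≤ x - x^3/6 + x^5/120 := by
  have h := phi_nonneg_of_hasDerivAt (fun y => y - y^3/6 + y^5/120 - Real.sin y)
    (fun y => (1 - y^2/2 + y^4/24) - Real.cos y)
    (fun y => by
      have := ((((hasDerivAt_id y).sub ((hasDerivAt_pow 3 y).div_const 6)).add
        ((hasDerivAt_pow 5 y).div_const 120)).sub (Real.hasDerivAt_sin y))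
      refine this.congr_deriv ?_
      simp
      ring)
    (by norm_num)
    (fun y hy => by linarith [phi_cos_le_t4 hy]) hx
  linarith [h]

private lemma phi_cos_ge_t6 {x : ℝ} (hx : 0 ≤ x) :
    1 - x^2/2 + x^4/24 - x^6/720 ≤ Real.cos x := by
  have h := phi_nonneg_of_hasDerivAt (fun y => Real.cos y - (1 - y^2/2 + y^4/24 - y^6/720))
    (fun y => (y - y^3/6 + y^5/120) - Real.sin y)
    (fun y => by
      have := (Real.hasDerivAt_cos y).sub ((((hasDerivAt_const y (1:ℝ)).sub
        ((hasDerivAt_pow 2 y).div_const 2)).add ((hasDerivAt_pow 4 y).div_const 24)).sub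
        ((hasDerivAt_pow 6 y).div_const 720))
      refine this.congr_deriv ?_
      simp
      ring)
    (by norm_num)
    (fun y hy => by linarith [phi_sin_le_t5 hy]) hx
  linarith [h]

private lemma phi_sin_ge_t7 {x : ℝ} (hx : 0 ≤ x) :
    x - x^3/6 + x^5/120 - x^7/5040 ≤ Real.sin x := by
  have h := phi_nonneg_of_hasDerivAt (fun y => Real.sin y - (y - y^3/6 + y^5/120 - y^7/5040))
    (fun y => Real.cos y - (1 - y^2/2 + y^4/24 - y^6/720))
    (fun y => by
      have := (Real.hasDerivAt_sin y).sub ((((hasDerivAt_id y).sub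
        ((hasDerivAt_pow 3 y).div_const 6)).add ((hasDerivAt_pow 5 y).div_const 120)).sub
        ((hasDerivAt_pow 7 y).div_const 5040))
      refine this.congr_deriv ?_
      simp
      ring)
    (by norm_num)
    (fun y hy => by linarith [phi_cos_ge_t6 hy]) hx
  linarith [h]

theorem phi_pos (x : ℝ) (hx : 0 < x) (hx2 : x ≤ Real.pi / 2) :
    0 < (9 - 24 * x ^ 2) * Real.cos x - 9 * Real.cos (3 * x) - 4 * x * Real.sin (3 * x) := by
  have hpy : Real.sin x ^ 2 + Real.cos x ^ 2 = 1 := Real.sin_sq_add_cos_sq x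
  have hc0 : 0 ≤ Real.cos x :=
    Real.cos_nonneg_of_mem_Icc ⟨by linarith [Real.pi_pos], hx2⟩
  have hs0 : 0 ≤ Real.sin x :=
    Real.sin_nonneg_of_nonneg_of_le_pi hx.le (by linarith [Real.pi_pos])
  have hxle : x ≤ 1.575 := by nlinarith [Real.pi_lt_d2]
  set s := Real.sin x with hsdef
  set c := Real.cos x with hcdef
  rw [Real.cos_three_mul, Real.sin_three_mul]
  have hsl : x - x^3/6 + x^5/120 - x^7/5040 ≤ s := phi_sin_ge_t7 hx.le
  have hsu : s ≤ x - x^3/6 + x^5/120 := phi_sin_le_t5 hx.le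
  have hcl : 1 - x^2/2 + x^4/24 - x^6/720 ≤ c := phi_cos_ge_t6 hx.le
  have hcu : c ≤ 1 - x^2/2 + x^4/24 := phi_cos_le_t4 hx.le
  have key : 0 < 9*c*s^2 - 6*x^2*c - 3*x*s + 4*x*s^3 := by
    rcases le_or_gt x 1.56 with h156 | h156
    · -- region 1 : 0 < x ≤ 1.56
      have ht : (0:ℝ) < x^2 := by positivity
      have ht2 : x^2 ≤ 2.4336 := by nlinarith
      have hsl0 : 0 ≤ x - x^3/6 + x^5/120 - x^7/5040 := by
        have h : (0:ℝ) ≤ 1 - x^2/6 + (x^2)^2/120 - (x^2)^3/5040 := by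
          nlinarith [mul_nonneg (sub_nonneg.2 ht2) ht.le,
            mul_nonneg (sub_nonneg.2 ht2) (sq_nonneg x),
            mul_nonneg (mul_nonneg (sub_nonneg.2 ht2) ht.le) ht.le]
        nlinarith [mul_nonneg hx.le h]
      have hcl0 : 0 ≤ 1 - x^2/2 + x^4/24 - x^6/720 := by
        nlinarith [mul_nonneg (sub_nonneg.2 ht2) ht.le,
          mul_nonneg (mul_nonneg (sub_nonneg.2 ht2) ht.le) ht.le,
          sq_nonneg (x^2 - 2.4336)]
      have e1 : 9 * ((1 - x^2/2 + x^4/24 - x^6/720) * (x - x^3/6 + x^5/120 - x^7/5040)^2)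
          ≤ 9*c*s^2 := by
        nlinarith [mul_nonneg (sub_nonneg.2 hcl) (sq_nonneg s),
          mul_nonneg (mul_nonneg hcl0 (sub_nonneg.2 hsl))
            (show (0:ℝ) ≤ s + (x - x^3/6 + x^5/120 - x^7/5040) by linarith)]
      have e4 : 4*x*(x - x^3/6 + x^5/120 - x^7/5040)^3 ≤ 4*x*s^3 := by
        have hcube : (x - x^3/6 + x^5/120 - x^7/5040)^3 ≤ s^3 := by
          have hs0' : (0:ℝ) ≤ s := by linarith
          nlinarith [mul_nonneg (sub_nonneg.2 hsl) (sq_nonneg s),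
            mul_nonneg (sub_nonneg.2 hsl) (sq_nonneg (x - x^3/6 + x^5/120 - x^7/5040)),
            mul_nonneg (mul_nonneg (sub_nonneg.2 hsl) hs0') hsl0]
        nlinarith [mul_nonneg hx.le (sub_nonneg.2 hcube)]
      have e2 : -6*x^2*c ≥ -6*x^2*(1 - x^2/2 + x^4/24) := by
        nlinarith [mul_nonneg ht.le (sub_nonneg.2 hcu)]
      have e3 : -3*x*s ≥ -3*x*(x - x^3/6 + x^5/120) := by
        nlinarith [mul_nonneg hx.le (sub_nonneg.2 hsu)]
      have hR : 0 < 113/1680 - 773/43200*x^2 + 407/201600*(x^2)^2 - 2353/16934400*(x^2)^3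
          + 71/11289600*(x^2)^4 - 191/1016064000*(x^2)^5 + 1/290304000*(x^2)^6
          - 1/32006016000*(x^2)^7 := by
        nlinarith [mul_nonneg (sub_nonneg.2 ht2) ht.le,
          mul_nonneg (mul_nonneg (sub_nonneg.2 ht2) ht.le) ht.le,
          mul_nonneg (sub_nonneg.2 ht2) (pow_nonneg ht.le 3),
          mul_nonneg (sub_nonneg.2 ht2) (pow_nonneg ht.le 4),
          mul_nonneg (sub_nonneg.2 ht2) (pow_nonneg ht.le 5),
          mul_nonneg (sub_nonneg.2 ht2) (pow_nonneg ht.le 6)]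
      have hQ : 0 < 9 * ((1 - x^2/2 + x^4/24 - x^6/720) * (x - x^3/6 + x^5/120 - x^7/5040)^2)
          - 6*x^2*(1 - x^2/2 + x^4/24) - 3*x*(x - x^3/6 + x^5/120)
          + 4*x*(x - x^3/6 + x^5/120 - x^7/5040)^3 := by
        have expand : 9 * ((1 - x^2/2 + x^4/24 - x^6/720) * (x - x^3/6 + x^5/120 - x^7/5040)^2)
            - 6*x^2*(1 - x^2/2 + x^4/24) - 3*x*(x - x^3/6 + x^5/120)
            + 4*x*(x - x^3/6 + x^5/120 - x^7/5040)^3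
            = x^8 * (113/1680 - 773/43200*x^2 + 407/201600*(x^2)^2 - 2353/16934400*(x^2)^3
            + 71/11289600*(x^2)^4 - 191/1016064000*(x^2)^5 + 1/290304000*(x^2)^6
            - 1/32006016000*(x^2)^7) := by ring
        rw [expand]
        have hx8 : (0:ℝ) < x^8 := by positivity
        exact mul_pos hx8 hR
      linarith
    · -- region 2 : 1.56 < x ≤ 1.575
      have hsle1 : s ≤ 1 := Real.sin_le_one x
      have hx0 : (0:ℝ) < x := hx
      have h2u : x^2 ≤ 2.480625 := by nlinarith
      have h2l : (2.4336:ℝ) ≤ x^2 := by nlinarith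
      have ha : (0:ℝ) ≤ 1.575 - x := by linarith
      have hb : (0:ℝ) ≤ x - 1.56 := by linarith
      have h3u : x^3 ≤ 3.90699 := by
        nlinarith [mul_nonneg (sub_nonneg.2 h2u) hx0.le, mul_nonneg ha (sub_nonneg.2 h2u)]
      have h4u : x^4 ≤ 6.1536 := by nlinarith [sq_nonneg (x^2 - 2.480625)]
      have h5l : (9.23:ℝ) ≤ x^5 := by
        nlinarith [mul_nonneg (sub_nonneg.2 h2l) (mul_nonneg (sub_nonneg.2 h2l) hb),
          mul_nonneg (sub_nonneg.2 h2l) (sub_nonneg.2 h2l), mul_nonneg (sub_nonneg.2 h2l) hb]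
      have h7u : x ^ 7 ≤ 24.05 := by
        nlinarith [mul_nonneg (sub_nonneg.2 h2u)
            (mul_nonneg (sq_nonneg x) (mul_nonneg (sq_nonneg x) hx0.le)),
          mul_nonneg (sub_nonneg.2 h2u) (mul_nonneg (sq_nonneg x) hx0.le),
          mul_nonneg (sub_nonneg.2 h2u) hx0.le,
          mul_nonneg ha (mul_nonneg (sq_nonneg x) (sq_nonneg x))]
      have hs98 : (0.98:ℝ) ≤ s := by linarith
      have hcle : c ≤ 0.04 := by linarith
      nlinarith [mul_nonneg hc0 (sq_nonneg s), mul_nonneg (sub_nonneg.2 hcle) (sq_nonneg (s-1)),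
        mul_nonneg (sub_nonneg.2 hs98) (sub_nonneg.2 hsle1),
        mul_nonneg (mul_nonneg hx0.le hs0) (sub_nonneg.2 hs98),
        sq_nonneg (s-1), mul_nonneg hc0 (sq_nonneg x)]
  calc (0:ℝ) < 4*(9*c*s^2 - 6*x^2*c - 3*x*s + 4*x*s^3) := by linarith
    _ = (9 - 24*x^2)*c - 9*(4*c^3 - 3*c) - 4*x*(3*s - 4*s^3) := by
        linear_combination (36*c) * hpy
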